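/- Define c_m = (1/m)·∫_0^1 (u − 1/2)·u·∏_{k=1}^{m−1}(k − u) du for integers m ≥ 1. Then c_1 = 1/12, c_2 = 0, and c_m < 0 for all m > 2. -/

import Mathlib

/-- The coefficients of Binet's second factorial series. -/
noncomputable def binetC (m : ℕ) : ℝ :=
  (1 / (m : ℝ)) * ∫ u in (0:ℝ)..1, (u - 1/2) * u * ∏ k ∈ Finset.Icc 1 (m - 1), ((k : ℝ) - u)

open MeasureTheory Set


lemma binet_neg (m : ℕ) (hm : 2 < m) :
    (∫ u in (0:ℝ)..1, (u - 1/2) * u * ∏ k ∈ Finset.Icc 1 (m - 1), ((k : ℝ) - u)) < 0 := by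
  set f : ℝ → ℝ := fun u => (u - 1/2) * u * ∏ k ∈ Finset.Icc 1 (m - 1), ((k : ℝ) - u) with hf
  set Q : ℝ → ℝ := fun v => ∏ k ∈ Finset.Icc 2 (m - 1), ((k : ℝ) - v) with hQ
  have hcf : Continuous f := by
    apply Continuous.mul
    · fun_prop
    · exact continuous_finset_prod _ fun k _ => by fun_prop
  have hcQ : Continuous Q := continuous_finset_prod _ fun k _ => by fun_prop
  set h : ℝ → ℝ := fun u => f u + f (1 - u) with hh
  have hch : Continuous h := hcf.add (hcf.comp (by fun_prop))
  -- product split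
  have split : ∀ v : ℝ, (∏ k ∈ Finset.Icc 1 (m - 1), ((k : ℝ) - v)) = (1 - v) * Q v := by
    intro v
    rw [Finset.Icc_eq_cons_Ioc (by omega : 1 ≤ m - 1), Finset.prod_cons,
      show Finset.Ioc 1 (m - 1) = Finset.Icc 2 (m - 1) from (Finset.Icc_add_one_left_eq_Ioc 1 (m - 1)).symm]
    norm_num [hQ]
  -- pointwise negativity on (0, 1/2)
  have key : ∀ u : ℝ, u ∈ Ioo (0:ℝ) (1/2) → h u < 0 := by
    intro u hu
    obtain ⟨hu0, hu2⟩ := hu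
    have hQlt : Q (1 - u) < Q u := by
      apply Finset.prod_lt_prod_of_nonempty
      · intro k hk
        rw [Finset.mem_Icc] at hk
        have : (2:ℝ) ≤ k := by exact_mod_cast hk.1
        linarith
      · intro k _; linarith
      · exact Finset.nonempty_Icc.mpr (by omega)
    have heq : h u = (u - 1/2) * (u * ((1 - u) * (Q u - Q (1 - u)))) := by
      simp only [hh, hf, split]
      ring
    rw [heq]
    apply mul_neg_of_neg_of_pos (by linarith)
    apply mul_pos hu0
    apply mul_pos (by linarith) (by linarith)
  -- integral manipulations
  have hfi : ∀ a b : ℝ, IntervalIntegrable f volume a b := fun a b => hcf.intervalIntegrable a b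
  have hhi : ∀ a b : ℝ, IntervalIntegrable h volume a b := fun a b => hch.intervalIntegrable a b
  have e1 : (∫ u in (0:ℝ)..1, f (1 - u)) = ∫ u in (0:ℝ)..1, f u := by
    have := intervalIntegral.integral_comp_sub_left (a := (0:ℝ)) (b := 1) f 1
    simpa using this
  have e2 : (∫ u in (0:ℝ)..1, h u) = 2 * ∫ u in (0:ℝ)..1, f u := by
    simp only [hh]
    have hg1 : IntervalIntegrable (fun u : ℝ => f (1 - u)) volume 0 1 :=
      (hcf.comp (by fun_prop : Continuous fun u : ℝ => 1 - u)).intervalIntegrable 0 1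
    rw [intervalIntegral.integral_add (hfi 0 1) hg1, e1]
    ring
  have e3 : (∫ u in (0:ℝ)..1, h u)
      = (∫ u in (0:ℝ)..(1/2:ℝ), h u) + ∫ u in (1/2:ℝ)..1, h u :=
    (intervalIntegral.integral_add_adjacent_intervals (hhi 0 (1/2)) (hhi (1/2) 1)).symm
  have e4 : (∫ u in (1/2:ℝ)..1, h u) = ∫ u in (0:ℝ)..(1/2:ℝ), h u := by
    have hsymm : ∀ x : ℝ, h (1 - x) = h x := by
      intro x; simp only [hh, sub_sub_cancel]; ring
    have := intervalIntegral.integral_comp_sub_left h 1 (a := 0) (b := 1/2)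
    simp only [hsymm] at this
    rw [this]; norm_num
  have neg : (∫ u in (0:ℝ)..(1/2:ℝ), h u) < 0 := by
    have := intervalIntegral.intervalIntegral_pos_of_pos_on (f := fun u => -h u)
      ((hch.neg).intervalIntegrable 0 (1/2))
      (fun x hx => by have := key x hx; simpa using this) (by norm_num)
    rw [intervalIntegral.integral_neg] at this
    linarith
  have : (∫ u in (0:ℝ)..1, f u) < 0 := by
    rw [e4] at e3; rw [e3] at e2; linarith
  exact this

theorem binetC_values_and_neg :
    binetC 1 = 1/12 ∧ binetC 2 = 0 ∧ ∀ m : ℕ, 2 < m → binetC m < 0 := by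
  refine ⟨?_, ?_, ?_⟩
  · have hI : (∫ u in (0:ℝ)..1, (u - 1/2) * u) = 1/12 := by
      have h : ∀ u : ℝ, (u - 1/2) * u = u^2 - (1/2)*u := by intro u; ring
      simp_rw [h]
      rw [intervalIntegral.integral_sub ((continuous_pow 2).intervalIntegrable 0 1)
        (((by fun_prop : Continuous fun u : ℝ => (1/2)*u)).intervalIntegrable 0 1),
        intervalIntegral.integral_const_mul, integral_pow, integral_id]
      norm_num
    rw [binetC, show Finset.Icc 1 (1-1) = (∅ : Finset ℕ) from rfl]
    simp only [Finset.prod_empty, mul_one, Nat.cast_one]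
    rw [hI]; norm_num
  · have hI : (∫ u in (0:ℝ)..1, (u - 1/2) * u * (1 - u)) = 0 := by
      have h : ∀ u : ℝ, (u - 1/2) * u * (1 - u) = -(u^3) + (3/2)*u^2 - (1/2)*u := by
        intro u; ring
      simp_rw [h]
      rw [intervalIntegral.integral_sub
          (((by fun_prop : Continuous fun u : ℝ => -(u^3) + (3/2)*u^2)).intervalIntegrable 0 1)
          (((by fun_prop : Continuous fun u : ℝ => (1/2)*u)).intervalIntegrable 0 1),
        intervalIntegral.integral_add (((by fun_prop : Continuous fun u : ℝ => -(u^3))).intervalIntegrable 0 1)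
          (((by fun_prop : Continuous fun u : ℝ => (3/2)*u^2)).intervalIntegrable 0 1),
        intervalIntegral.integral_neg, intervalIntegral.integral_const_mul,
        intervalIntegral.integral_const_mul, integral_pow, integral_pow, integral_id]
      norm_num
    rw [binetC, show Finset.Icc 1 (2-1) = ({1} : Finset ℕ) from rfl]
    simp only [Finset.prod_singleton, Nat.cast_one]
    rw [hI]; norm_num
  · intro m hm
    rw [binetC]
    apply mul_neg_of_pos_of_neg
    · positivity
    · exact binet_neg m hm
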